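/- Let G be a game of type B2 with parameters (n1, n2, k1), let g ∈ P2 be a player of level 2 of G, and let H be a simple game on a player set disjoint from that of G which has a minimal winning coalition with at least two players. Then the composition G∘_g H is not weighted. -/

import Mathlib

open scoped Classical

/-- A simple game: a finite nonempty set of players together with a
nonempty, superset-closed collection of winning coalitions, all of which
are subsets of the player set. -/
structure SimpleGame (α : Type) where
  players : Finset α
  players_nonempty : players.Nonempty
  winning : Finset α → Prop
  winning_subset : ∀ X, winning X → X ⊆ players
  winning_nonempty : ∃ X, winning X
  winning_mono : ∀ ⦃X Y : Finset α⦄, winning X → X ⊆ Y → Y ⊆ players → winning Y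

namespace SimpleGame

variable {α : Type}

/-- A minimal winning coalition: winning, and all proper subsets are losing. -/
def MinWinning (G : SimpleGame α) (X : Finset α) : Prop :=
  G.winning X ∧ ∀ Y ⊂ X, ¬ G.winning Y

/-- A dummy: a player belonging to no minimal winning coalition. -/
def IsDummy (G : SimpleGame α) (p : α) : Prop :=
  ∀ X, G.MinWinning X → p ∉ X

/-- A passer: a player winning on its own. -/
def IsPasser (G : SimpleGame α) (p : α) : Prop := G.winning {p}

/-- A vetoer: a player belonging to every winning coalition. -/
def IsVetoer (G : SimpleGame α) (p : α) : Prop := ∀ X, G.winning X → p ∈ X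

/-- Isbell's desirability relation: `i ⪰ j`. -/
def Geq (G : SimpleGame α) (i j : α) : Prop :=
  ∀ X ⊆ G.players, i ∉ X → j ∉ X → G.winning (insert j X) → G.winning (insert i X)

/-- Strict desirability: `i ≻ j`. -/
def Gt (G : SimpleGame α) (i j : α) : Prop := G.Geq i j ∧ ¬ G.Geq j i

/-- A complete game: the desirability relation is total on players. -/
def Complete (G : SimpleGame α) : Prop :=
  ∀ i ∈ G.players, ∀ j ∈ G.players, G.Geq i j ∨ G.Geq j i

/-- A weighted game: there are nonnegative real weights and a real quota such
that a coalition is winning iff its total weight meets the quota. -/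
def Weighted (G : SimpleGame α) : Prop :=
  ∃ (w : α → ℝ) (q : ℝ), (∀ i, 0 ≤ w i) ∧
    ∀ X ⊆ G.players, (G.winning X ↔ q ≤ ∑ i ∈ X, w i)

/-- `IsComposition C G H g` says that `C` is the composition `G ∘_g H`:
its player set is `(P_G \ {g}) ∪ P_H` and a coalition `X` of `C` is winning
iff `X ∩ P_G` is winning in `G`, or `(X ∩ P_G) ∪ {g}` is winning in `G` and
`X ∩ P_H` is winning in `H`. -/
def IsComposition (C G H : SimpleGame α) (g : α) : Prop :=
  C.players = (G.players \ {g}) ∪ H.players ∧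
  ∀ X ⊆ C.players,
    (C.winning X ↔ (G.winning (X ∩ G.players) ∨
      (G.winning (insert g (X ∩ G.players)) ∧ H.winning (X ∩ H.players))))

/-- `G` is the `k`-out-of-`n` game `H_{n,k}`: it has `n` players and a
coalition is winning iff it has at least `k` players. -/
def IsKOutOfN (G : SimpleGame α) (n k : ℕ) : Prop :=
  G.players.card = n ∧ ∀ X ⊆ G.players, (G.winning X ↔ k ≤ X.card)

/-- Isomorphism of simple games: a bijection between the player sets mapping
winning coalitions exactly onto winning coalitions. -/
def Isomorphic {β : Type} (G : SimpleGame α) (G' : SimpleGame β) : Prop :=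
  ∃ σ : α → β, Set.InjOn σ ↑G.players ∧ G.players.image σ = G'.players ∧
    ∀ X ⊆ G.players, (G.winning X ↔ G'.winning (X.image σ))

/-- A decomposable game: one isomorphic to a composition `H ∘_h K` where both
`H` and `K` have at least two players. -/
def Decomposable (G : SimpleGame α) : Prop :=
  ∃ (β : Type) (H K C : SimpleGame β) (h : β),
    Disjoint H.players K.players ∧ h ∈ H.players ∧
    2 ≤ H.players.card ∧ 2 ≤ K.players.card ∧
    IsComposition C H K h ∧ Isomorphic G C

/-- `(X1, X2; Y1, Y2)` is a trading transform: every player belongs to exactly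
as many of `X1, X2` (with multiplicity) as of `Y1, Y2`. -/
def IsTradingTransform2 (X1 X2 Y1 Y2 : Finset α) : Prop :=
  ∀ a : α, ((if a ∈ X1 then 1 else 0) + (if a ∈ X2 then 1 else 0) : ℕ)
    = (if a ∈ Y1 then 1 else 0) + (if a ∈ Y2 then 1 else 0)

end SimpleGame

open SimpleGame
/-- the composition of a game of type B2, over a player `g` of
level 2, with a game having a minimal winning coalition of size at least two,
is not weighted. -/
theorem statement16 {α : Type} (n1 n2 k1 : ℕ)
    (G : SimpleGame α) (P1 P2 : Finset α)
    (hP : Disjoint P1 P2) (hplayers : G.players = P1 ∪ P2)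
    (hP1 : P1.card = n1) (hP2 : P2.card = n2)
    (hk1 : 1 < k1) (hk1n1 : k1 ≤ n1) (hk2n2 : k1 + 1 ≤ n2)
    (hwin : ∀ X ⊆ G.players,
      (G.winning X ↔ (k1 ≤ (X ∩ P1).card ∨ k1 + 1 ≤ X.card)))
    (g : α) (hg : g ∈ P2)
    (H C : SimpleGame α)
    (hdisj : Disjoint G.players H.players)
    (hU : ∃ U : Finset α, H.MinWinning U ∧ 2 ≤ U.card)
    (hC : SimpleGame.IsComposition C G H g) :
    ¬ C.Weighted := by
  classical
  obtain ⟨hCp, hCwin⟩ := hC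
  rintro ⟨w, q, hwpos, hq⟩
  obtain ⟨U, ⟨hUwin, hUmin⟩, hUcard⟩ := hU
  have hUH : U ⊆ H.players := H.winning_subset U hUwin
  have hP1G : P1 ⊆ G.players := by rw [hplayers]; exact Finset.subset_union_left
  have hP2G : P2 ⊆ G.players := by rw [hplayers]; exact Finset.subset_union_right
  have hgG : g ∈ G.players := hP2G hg
  have hgP1 : g ∉ P1 := fun h => (Finset.disjoint_left.mp hP h) hg
  -- choose S ⊆ P1 of size k1
  obtain ⟨S, hSP1, hScard⟩ := Finset.exists_subset_card_eq (s := P1) (n := k1) (by rw [hP1]; exact hk1n1)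
  -- choose T ⊆ P2 \ {g} of size k1
  obtain ⟨T, hTE, hTcard⟩ := Finset.exists_subset_card_eq (s := P2.erase g) (n := k1)
    (by rw [Finset.card_erase_of_mem hg, hP2]; omega)
  have hTP2 : T ⊆ P2 := hTE.trans (Finset.erase_subset _ _)
  have hgT : g ∉ T := fun h => (Finset.mem_erase.mp (hTE h)).1 rfl
  obtain ⟨s, hsS⟩ := Finset.card_pos.mp (by rw [hScard]; omega : 0 < S.card)
  obtain ⟨t, htT⟩ := Finset.card_pos.mp (by rw [hTcard]; omega : 0 < T.card)
  obtain ⟨u, huU⟩ := Finset.card_pos.mp (by omega : 0 < U.card)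
  have hsP1 : s ∈ P1 := hSP1 hsS
  have htP2 : t ∈ P2 := hTP2 htT
  have huH : u ∈ H.players := hUH huU
  have hGnotH : ∀ a ∈ G.players, a ∉ H.players := fun a ha => Finset.disjoint_left.mp hdisj ha
  have hHnotG : ∀ a ∈ H.players, a ∉ G.players := fun a ha => Finset.disjoint_right.mp hdisj ha
  have hP1notP2 : ∀ a ∈ P1, a ∉ P2 := fun a ha => Finset.disjoint_left.mp hP ha
  have htP1 : t ∉ P1 := fun h => hP1notP2 t h htP2
  have huG : u ∉ G.players := hHnotG u huH
  have hsT : s ∉ T := fun h => hP1notP2 s hsP1 (hTP2 h)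
  -- the four coalitions
  set A : Finset α := insert t (S.erase s) with hAdef
  set B : Finset α := insert s (T.erase t) with hBdef
  set X1 : Finset α := S with hX1def
  set X2 : Finset α := T ∪ U with hX2def
  set Y1 : Finset α := insert u A with hY1def
  set Y2 : Finset α := B ∪ U.erase u with hY2def
  -- basic membership facts
  have htSe : t ∉ S.erase s := fun h => htP1 (hSP1 (Finset.mem_of_mem_erase h))
  have huA : u ∉ A := by
    intro h
    rcases Finset.mem_insert.mp h with h | h
    · exact huG (h ▸ hP2G htP2)
    · exact huG (hP1G (hSP1 (Finset.mem_of_mem_erase h)))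
  have hsTe : s ∉ T.erase t := fun h => hsT (Finset.mem_of_mem_erase h)
  have hAG : A ⊆ G.players := by
    intro a ha
    rcases Finset.mem_insert.mp ha with h | h
    · exact h ▸ hP2G htP2
    · exact hP1G (hSP1 (Finset.mem_of_mem_erase h))
  have hBG : B ⊆ G.players := by
    intro a ha
    rcases Finset.mem_insert.mp ha with h | h
    · exact h ▸ hP1G hsP1
    · exact hP2G (hTP2 (Finset.mem_of_mem_erase h))
  have hgA : g ∉ A := by
    intro h
    rcases Finset.mem_insert.mp h with h | h
    · exact (Finset.mem_erase.mp (hTE htT)).1 h.symm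
    · exact hgP1 (hSP1 (Finset.mem_of_mem_erase h))
  have hgB : g ∉ B := by
    intro h
    rcases Finset.mem_insert.mp h with h | h
    · exact hgP1 (h ▸ hsP1)
    · exact hgT (Finset.mem_of_mem_erase h)
  -- cards
  have hSe : (S.erase s).card = k1 - 1 := by rw [Finset.card_erase_of_mem hsS, hScard]
  have hTe : (T.erase t).card = k1 - 1 := by rw [Finset.card_erase_of_mem htT, hTcard]
  have hAcard : A.card = k1 := by
    rw [hAdef, Finset.card_insert_of_notMem htSe, hSe]; omega
  have hBcard : B.card = k1 := by
    rw [hBdef, Finset.card_insert_of_notMem hsTe, hTe]; omega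
  -- intersections with P1
  have hSP1i : S ∩ P1 = S := Finset.inter_eq_left.mpr hSP1
  have hAP1 : A ∩ P1 = S.erase s := by
    ext a
    simp only [hAdef, Finset.mem_inter, Finset.mem_insert]
    constructor
    · rintro ⟨h | h, hp⟩
      · exact absurd hp (h ▸ htP1)
      · exact h
    · intro h; exact ⟨Or.inr h, hSP1 (Finset.mem_of_mem_erase h)⟩
  have hBP1 : B ∩ P1 = {s} := by
    ext a
    simp only [hBdef, Finset.mem_inter, Finset.mem_insert, Finset.mem_singleton]
    constructor
    · rintro ⟨h | h, hp⟩
      · exact h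
      · exact absurd hp (hP1notP2 a (by exact hp) (hTP2 (Finset.mem_of_mem_erase h))).elim
    · intro h; exact ⟨Or.inl h, h ▸ hsP1⟩
  have hTP1 : T ∩ P1 = ∅ := by
    ext a
    simp only [Finset.mem_inter, Finset.notMem_empty, iff_false]
    rintro ⟨h1, h2⟩
    exact hP1notP2 a h2 (hTP2 h1)
  -- G winning / losing facts
  have hwinS : G.winning S := by
    refine (hwin S (hSP1.trans hP1G)).mpr (Or.inl ?_)
    rw [hSP1i, hScard]
  have hlosA : ¬ G.winning A := by
    intro h
    have := (hwin A hAG).mp h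
    rw [hAP1, hSe, hAcard] at this
    omega
  have hlosB : ¬ G.winning B := by
    intro h
    have := (hwin B hBG).mp h
    rw [hBP1, Finset.card_singleton, hBcard] at this
    omega
  have hlosT : ¬ G.winning T := by
    intro h
    have := (hwin T (hTP2.trans hP2G)).mp h
    rw [hTP1, Finset.card_empty, hTcard] at this
    omega
  have hwingA : G.winning (insert g A) := by
    refine (hwin _ (Finset.insert_subset hgG hAG)).mpr (Or.inr ?_)
    rw [Finset.card_insert_of_notMem hgA, hAcard]
  have hwingB : G.winning (insert g B) := by
    refine (hwin _ (Finset.insert_subset hgG hBG)).mpr (Or.inr ?_)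
    rw [Finset.card_insert_of_notMem hgB, hBcard]
  have hwingT : G.winning (insert g T) := by
    refine (hwin _ (Finset.insert_subset hgG (hTP2.trans hP2G))).mpr (Or.inr ?_)
    rw [Finset.card_insert_of_notMem hgT, hTcard]
  -- H losing facts
  have hlosu : ¬ H.winning {u} := by
    apply hUmin
    refine Finset.ssubset_iff_subset_ne.mpr ⟨Finset.singleton_subset_iff.mpr huU, ?_⟩
    intro h
    rw [← h, Finset.card_singleton] at hUcard
    omega
  have hlosUe : ¬ H.winning (U.erase u) := hUmin _ (Finset.erase_ssubset huU)
  -- subsets of C.players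
  have hmemC : ∀ a, a ∈ G.players → a ≠ g → a ∈ C.players := by
    intro a ha hag
    rw [hCp]
    exact Finset.mem_union_left _ (Finset.mem_sdiff.mpr ⟨ha, by simpa using hag⟩)
  have hmemCH : ∀ a, a ∈ H.players → a ∈ C.players := by
    intro a ha
    rw [hCp]; exact Finset.mem_union_right _ ha
  have hX1C : X1 ⊆ C.players := fun a ha =>
    hmemC a (hP1G (hSP1 ha)) (fun h => hgP1 (h ▸ hSP1 ha))
  have hX2C : X2 ⊆ C.players := by
    intro a ha
    rcases Finset.mem_union.mp ha with h | h
    · exact hmemC a (hP2G (hTP2 h)) (fun e => hgT (e ▸ h))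
    · exact hmemCH a (hUH h)
  have hY1C : Y1 ⊆ C.players := by
    intro a ha
    rcases Finset.mem_insert.mp ha with h | h
    · exact hmemCH a (h ▸ huH)
    · exact hmemC a (hAG h) (fun e => hgA (e ▸ h))
  have hY2C : Y2 ⊆ C.players := by
    intro a ha
    rcases Finset.mem_union.mp ha with h | h
    · exact hmemC a (hBG h) (fun e => hgB (e ▸ h))
    · exact hmemCH a (hUH (Finset.mem_of_mem_erase h))
  -- intersections with G.players and H.players
  have hX1G : X1 ∩ G.players = S := Finset.inter_eq_left.mpr (hSP1.trans hP1G)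
  have hX2G : X2 ∩ G.players = T := by
    ext a
    simp only [hX2def, Finset.mem_inter, Finset.mem_union]
    constructor
    · rintro ⟨h | h, hG⟩
      · exact h
      · exact absurd hG (hHnotG a (hUH h))
    · intro h; exact ⟨Or.inl h, hP2G (hTP2 h)⟩
  have hX2H : X2 ∩ H.players = U := by
    ext a
    simp only [hX2def, Finset.mem_inter, Finset.mem_union]
    constructor
    · rintro ⟨h | h, hH⟩
      · exact absurd hH (hGnotH a (hP2G (hTP2 h)))
      · exact h
    · intro h; exact ⟨Or.inr h, hUH h⟩
  have hY1G : Y1 ∩ G.players = A := by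
    ext a
    simp only [hY1def, Finset.mem_inter, Finset.mem_insert]
    constructor
    · rintro ⟨h | h, hG⟩
      · exact absurd hG (h ▸ huG)
      · exact h
    · intro h; exact ⟨Or.inr h, hAG h⟩
  have hY1H : Y1 ∩ H.players = {u} := by
    ext a
    simp only [hY1def, Finset.mem_inter, Finset.mem_insert, Finset.mem_singleton]
    constructor
    · rintro ⟨h | h, hH⟩
      · exact h
      · exact absurd hH (hGnotH a (hAG h))
    · intro h; exact ⟨Or.inl h, h ▸ huH⟩
  have hY2G : Y2 ∩ G.players = B := by
    ext a
    simp only [hY2def, Finset.mem_inter, Finset.mem_union]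
    constructor
    · rintro ⟨h | h, hG⟩
      · exact h
      · exact absurd hG (hHnotG a (hUH (Finset.mem_of_mem_erase h)))
    · intro h; exact ⟨Or.inl h, hBG h⟩
  have hY2H : Y2 ∩ H.players = U.erase u := by
    ext a
    simp only [hY2def, Finset.mem_inter, Finset.mem_union]
    constructor
    · rintro ⟨h | h, hH⟩
      · exact absurd hH (hGnotH a (hBG h))
      · exact h
    · intro h; exact ⟨Or.inr h, hUH (Finset.mem_of_mem_erase h)⟩
  -- C winning / losing
  have hwinX1 : C.winning X1 := (hCwin X1 hX1C).mpr (Or.inl (by rw [hX1G]; exact hwinS))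
  have hwinX2 : C.winning X2 :=
    (hCwin X2 hX2C).mpr (Or.inr ⟨by rw [hX2G]; exact hwingT, by rw [hX2H]; exact hUwin⟩)
  have hlosY1 : ¬ C.winning Y1 := by
    intro h
    rcases (hCwin Y1 hY1C).mp h with h | ⟨_, h2⟩
    · rw [hY1G] at h; exact hlosA h
    · rw [hY1H] at h2; exact hlosu h2
  have hlosY2 : ¬ C.winning Y2 := by
    intro h
    rcases (hCwin Y2 hY2C).mp h with h | ⟨_, h2⟩
    · rw [hY2G] at h; exact hlosB h
    · rw [hY2H] at h2; exact hlosUe h2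
  -- weight inequalities
  have hq1 : q ≤ ∑ i ∈ X1, w i := (hq X1 hX1C).mp hwinX1
  have hq2 : q ≤ ∑ i ∈ X2, w i := (hq X2 hX2C).mp hwinX2
  have hq3 : ∑ i ∈ Y1, w i < q := lt_of_not_ge (fun h => hlosY1 ((hq Y1 hY1C).mpr h))
  have hq4 : ∑ i ∈ Y2, w i < q := lt_of_not_ge (fun h => hlosY2 ((hq Y2 hY2C).mpr h))
  -- sum computations
  have hdTU : Disjoint T U := Finset.disjoint_left.mpr
    (fun a ha h => hGnotH a (hP2G (hTP2 ha)) (hUH h))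
  have hdBU : Disjoint B (U.erase u) := Finset.disjoint_left.mpr
    (fun a ha h => hGnotH a (hBG ha) (hUH (Finset.mem_of_mem_erase h)))
  have hsum1 : ∑ i ∈ X1, w i = w s + ∑ i ∈ S.erase s, w i :=
    (Finset.add_sum_erase S w hsS).symm
  have hsum2 : ∑ i ∈ X2, w i = ∑ i ∈ T, w i + ∑ i ∈ U, w i :=
    Finset.sum_union hdTU
  have hsumT : ∑ i ∈ T, w i = w t + ∑ i ∈ T.erase t, w i :=
    (Finset.add_sum_erase T w htT).symm
  have hsumU : ∑ i ∈ U, w i = w u + ∑ i ∈ U.erase u, w i :=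
    (Finset.add_sum_erase U w huU).symm
  have hsum3 : ∑ i ∈ Y1, w i = w u + (w t + ∑ i ∈ S.erase s, w i) := by
    rw [hY1def, Finset.sum_insert huA, hAdef, Finset.sum_insert htSe]
  have hsum4 : ∑ i ∈ Y2, w i = (w s + ∑ i ∈ T.erase t, w i) + ∑ i ∈ U.erase u, w i := by
    rw [hY2def, Finset.sum_union hdBU, hBdef, Finset.sum_insert hsTe]
  linarith
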